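/- arXiv:1201.3656 — 3 statements merged into one kernel-verified Lean document; each statement's English description precedes it below -/
import Mathlib

section
/- Let P = B[x_1] ∩ … ∩ B[x_f] (f ≥ 2) be an intersection of closed unit balls in E³ with nonempty interior and pairwise distinct centers. Then each face F_k = S(x_k) ∩ bd(P) is a spherically convex subset of S(x_k): for any y_1, y_2 ∈ F_k and any reals s, t ≥ 0 with w := s(y_1 − x_k) + t(y_2 − x_k) ≠ 0, the point x_k + w/‖w‖ belongs to F_k. -/
open Set Metric MeasureTheory
open scoped RealInnerProductSpace

noncomputable section

/-- Euclidean 3-space. -/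
abbrev E3 : Type := EuclideanSpace ℝ (Fin 3)

/-- The intersection of the closed unit balls centered at the points `x k`. -/
def bpoly {f : ℕ} (x : Fin f → E3) : Set E3 := ⋂ k, closedBall (x k) 1

/-- The family of unit balls centered at the `x k` is reduced: removing any one ball
yields a strictly larger intersection. -/
def Reduced {f : ℕ} (x : Fin f → E3) : Prop :=
  ∀ k : Fin f, ¬ (⋂ j ∈ {j : Fin f | j ≠ k}, closedBall (x j) 1) ⊆ closedBall (x k) 1

/-- `x` generates a ball-polyhedron: the intersection of the unit balls centered at the `x k`
has nonempty interior and the family is reduced. -/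
def IsBallPolyhedron {f : ℕ} (x : Fin f → E3) : Prop :=
  (interior (bpoly x)).Nonempty ∧ Reduced x

/-- The face of the ball-polyhedron generated by `x` corresponding to the `k`-th ball. -/
def face {f : ℕ} (x : Fin f → E3) (k : Fin f) : Set E3 :=
  sphere (x k) 1 ∩ frontier (bpoly x)

/-- A vertex of the ball-polyhedron: a boundary point lying on at least three
generating unit spheres. -/
def IsVertex {f : ℕ} (x : Fin f → E3) (p : E3) : Prop :=
  p ∈ frontier (bpoly x) ∧ 3 ≤ {k : Fin f | p ∈ sphere (x k) 1}.ncard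

/-- An edge of the ball-polyhedron: a nondegenerate (more than one point) connected
component of the intersection of two faces. -/
def IsEdge {f : ℕ} (x : Fin f → E3) (e : Set E3) : Prop :=
  ∃ i k : Fin f, i ≠ k ∧ (∃ p ∈ e, e = connectedComponentIn (face x i ∩ face x k) p) ∧
    ∃ a ∈ e, ∃ b ∈ e, a ≠ b

/-- The elements of the vertex-edge-face structure of the ball-polyhedron generated by `x`
(including `∅` and the whole body), as a family of subsets of `E3` ordered by inclusion. -/
def latticeElems {f : ℕ} (x : Fin f → E3) : Set (Set E3) :=
  {s | s = ∅ ∨ s = bpoly x ∨ (∃ p, IsVertex x p ∧ s = {p}) ∨ IsEdge x s ∨ ∃ k, s = face x k}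

/-- A family of sets, partially ordered by inclusion, forms a lattice: any two members have a
least upper bound and a greatest lower bound within the family. -/
def IsLatticeFamily (L : Set (Set E3)) : Prop :=
  ∀ A ∈ L, ∀ B ∈ L,
    (∃ S ∈ L, A ⊆ S ∧ B ⊆ S ∧ ∀ T ∈ L, A ⊆ T → B ⊆ T → S ⊆ T) ∧
    (∃ S ∈ L, S ⊆ A ∧ S ⊆ B ∧ ∀ T ∈ L, T ⊆ A → T ⊆ B → T ⊆ S)

/-- A standard ball-polyhedron: a ball-polyhedron whose vertex-edge-face structure is a
lattice with respect to containment. -/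
def IsStandard {f : ℕ} (x : Fin f → E3) : Prop :=
  IsBallPolyhedron x ∧ IsLatticeFamily (latticeElems x)

/-- A combinatorial equivalence between two ball-polyhedra: an inclusion-preserving
bijection between their face lattices. -/
structure CombEquiv {f f' : ℕ} (x : Fin f → E3) (x' : Fin f' → E3) where
  toFun : Set E3 → Set E3
  invFun : Set E3 → Set E3
  mapsTo : ∀ s ∈ latticeElems x, toFun s ∈ latticeElems x'
  mapsTo' : ∀ s ∈ latticeElems x', invFun s ∈ latticeElems x
  left_inv : ∀ s ∈ latticeElems x, invFun (toFun s) = s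
  right_inv : ∀ s ∈ latticeElems x', toFun (invFun s) = s
  incl : ∀ s ∈ latticeElems x, ∀ t ∈ latticeElems x, (s ⊆ t ↔ toFun s ⊆ toFun t)

/-- The inner dihedral angle at a point `p` of an edge lying on the faces coming from the
unit balls centered at `xi` and `xk`: it is `π` minus the angle between `p - xi` and `p - xk`. -/
def dihedralAngleAt (xi xk p : E3) : ℝ :=
  Real.pi - InnerProductGeometry.angle (p - xi) (p - xk)

/-- Under the combinatorial equivalence `φ`, corresponding edges of the two ball-polyhedra
carry equal inner dihedral angles. -/
def EqualDihedralAngles {f f' : ℕ} (x : Fin f → E3) (x' : Fin f' → E3)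
    (φ : CombEquiv x x') : Prop :=
  ∀ e, IsEdge x e →
    ∀ i k : Fin f, i ≠ k → e ⊆ face x i → e ⊆ face x k →
    ∀ i' k' : Fin f', i' ≠ k' → φ.toFun e ⊆ face x' i' → φ.toFun e ⊆ face x' k' →
    ∀ p ∈ e, ∀ p' ∈ φ.toFun e,
      dihedralAngleAt (x i) (x k) p = dihedralAngleAt (x' i') (x' k') p'

/-- Under the combinatorial equivalence `φ`, corresponding edges of the two ball-polyhedra
have equal arc length (one-dimensional Hausdorff measure). -/
def EqualEdgeLengths {f f' : ℕ} (x : Fin f → E3) (x' : Fin f' → E3)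
    (φ : CombEquiv x x') : Prop :=
  ∀ e, IsEdge x e → μH[1] e = μH[1] (φ.toFun e)

/-- `u` is the direction of the tangent half-line of the arc `e` at its point `v`:
`u` is a unit vector and the normalized secant directions of `e` at `v` converge to `u`. -/
def IsTangentDirAt (e : Set E3) (v u : E3) : Prop :=
  ‖u‖ = 1 ∧ v ∈ closure (e \ {v}) ∧
    ∀ ε > 0, ∃ δ > 0, ∀ w ∈ e, w ≠ v → ‖w - v‖ < δ →
      ‖(‖w - v‖⁻¹ • (w - v)) - u‖ < ε

/-- Under the combinatorial equivalence `φ`, at corresponding vertices of corresponding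
faces, the face angles (angles between the tangent half-lines of the two edges of the face
meeting at the vertex) are equal. -/
def EqualFaceAngles {f f' : ℕ} (x : Fin f → E3) (x' : Fin f' → E3)
    (φ : CombEquiv x x') : Prop :=
  ∀ v v' : E3, IsVertex x v → φ.toFun {v} = {v'} →
  ∀ k : Fin f, ∀ k' : Fin f', φ.toFun (face x k) = face x' k' →
  ∀ e₁ e₂, IsEdge x e₁ → IsEdge x e₂ → e₁ ≠ e₂ →
    v ∈ e₁ → v ∈ e₂ → e₁ ⊆ face x k → e₂ ⊆ face x k →
  ∀ u₁ u₂ u₁' u₂' : E3, IsTangentDirAt e₁ v u₁ → IsTangentDirAt e₂ v u₂ →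
    IsTangentDirAt (φ.toFun e₁) v' u₁' → IsTangentDirAt (φ.toFun e₂) v' u₂' →
    InnerProductGeometry.angle u₁ u₂ = InnerProductGeometry.angle u₁' u₂'

/-- Two subsets of `E3` are congruent if an isometry of `E3` maps one onto the other. -/
def CongruentSets (A B : Set E3) : Prop := ∃ T : E3 ≃ᵢ E3, T '' A = B

/-- The farthest-point Voronoi cell of the point `c i`. -/
def vorCell {n : ℕ} (c : Fin n → E3) (i : Fin n) : Set E3 :=
  {p : E3 | ∀ j, dist p (c j) ≤ dist p (c i)}

/-- `F` is a `d`-dimensional face of the closed convex set `C`: a nonempty closed convex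
extreme subset of `C` whose affine span has dimension `d`. -/
def IsFaceOfDim (C F : Set E3) (d : ℕ) : Prop :=
  F.Nonempty ∧ IsExtreme ℝ C F ∧ Convex ℝ F ∧ IsClosed F ∧
    Module.finrank ℝ (vectorSpan ℝ F) = d

/-- `p` is a vertex of the farthest-point Voronoi tiling of `c`:
a `0`-dimensional face of one of the cells. -/
def IsVorVertex {n : ℕ} (c : Fin n → E3) (p : E3) : Prop :=
  ∃ i, IsFaceOfDim (vorCell c i) {p} 0

/-- `e` is an edge of the farthest-point Voronoi tiling of `c`:
a `1`-dimensional face of one of the cells. -/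
def IsVorEdge {n : ℕ} (c : Fin n → E3) (e : Set E3) : Prop :=
  ∃ i, IsFaceOfDim (vorCell c i) e 1

/-- `F` is a face of the farthest-point Voronoi tiling of `c`:
a `2`-dimensional face of one of the cells. -/
def IsVorFace {n : ℕ} (c : Fin n → E3) (F : Set E3) : Prop :=
  ∃ i, IsFaceOfDim (vorCell c i) F 2

/-- The index set `I` spans a member `conv {c i : i ∈ I}` of the farthest-point Delaunay
complex of `c`: some point `p` has all points of `I` at the same distance `ρ` and
all other points strictly closer. -/
def DelaunayIndex {n : ℕ} (c : Fin n → E3) (I : Set (Fin n)) : Prop :=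
  ∃ p : E3, ∃ ρ : ℝ, 0 < ρ ∧ (∀ i ∈ I, dist p (c i) = ρ) ∧ ∀ j ∉ I, dist p (c j) < ρ

/-- A normal ball-polyhedron: a ball-polyhedron whose centers affinely span `E3` and such
that every vertex of the farthest-point Voronoi tiling of the centers lies in the interior
of the ball-polyhedron. -/
def IsNormal {f : ℕ} (x : Fin f → E3) : Prop :=
  IsBallPolyhedron x ∧ affineSpan ℝ (Set.range x) = ⊤ ∧
    ∀ p : E3, IsVorVertex x p → p ∈ interior (bpoly x)

/-- A cyclic sequence of reals has at least four sign changes (ignoring zeros):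
there are four cyclically ordered positions with alternating strict signs. -/
def AtLeastFourSignChanges {n : ℕ} (a : Fin n → ℝ) : Prop :=
  ∃ j₁ j₂ j₃ j₄ : Fin n, j₁ < j₂ ∧ j₂ < j₃ ∧ j₃ < j₄ ∧
    ((0 < a j₁ ∧ a j₂ < 0 ∧ 0 < a j₃ ∧ a j₄ < 0) ∨
     (a j₁ < 0 ∧ 0 < a j₂ ∧ a j₃ < 0 ∧ 0 < a j₄))

/-- The face angle of the ball-polyhedron generated by `x` at the vertex `v` of the face
`face x k`: the angle between the tangent half-lines at `v` of the two edges of that face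
meeting at `v`. -/
noncomputable def faceAngle {f : ℕ} (x : Fin f → E3) (k : Fin f) (v : E3) : ℝ :=
  Classical.epsilon fun θ : ℝ =>
    ∃ e₁ e₂ u₁ u₂, IsEdge x e₁ ∧ IsEdge x e₂ ∧ e₁ ≠ e₂ ∧
      v ∈ e₁ ∧ v ∈ e₂ ∧ e₁ ⊆ face x k ∧ e₂ ⊆ face x k ∧
      IsTangentDirAt e₁ v u₁ ∧ IsTangentDirAt e₂ v u₂ ∧
      θ = InnerProductGeometry.angle u₁ u₂

/-- Each face `F_k = S(x_k) ∩ bd(P)` of an intersection of unit balls with nonempty interior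
and pairwise distinct centers is a spherically convex subset of the unit sphere `S(x_k)`. -/
theorem face_spherically_convex {f : ℕ} (hf : 2 ≤ f) (x : Fin f → E3)
    (hint : (interior (bpoly x)).Nonempty)
    (hne : ∀ i k : Fin f, i ≠ k → x i ≠ x k) (k : Fin f) :
    ∀ y₁ ∈ face x k, ∀ y₂ ∈ face x k, ∀ s t : ℝ, 0 ≤ s → 0 ≤ t →
      ∀ w : E3, w = s • (y₁ - x k) + t • (y₂ - x k) → w ≠ 0 →
        x k + ‖w‖⁻¹ • w ∈ face x k := by
  intro y₁ hy₁ y₂ hy₂ s t hs ht w hw hw0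
  obtain ⟨hy₁s, hy₁f⟩ := hy₁
  obtain ⟨hy₂s, hy₂f⟩ := hy₂
  set c := x k with hc
  have hclosed : IsClosed (bpoly x) := isClosed_iInter fun j => isClosed_closedBall
  have hy₁b : y₁ ∈ bpoly x := hclosed.frontier_subset hy₁f
  have hy₂b : y₂ ∈ bpoly x := hclosed.frontier_subset hy₂f
  have hu₁ : ‖y₁ - c‖ = 1 := by
    simpa [dist_eq_norm] using (mem_sphere.mp hy₁s)
  have hu₂ : ‖y₂ - c‖ = 1 := by
    simpa [dist_eq_norm] using (mem_sphere.mp hy₂s)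
  have hnw : ‖w‖ ≤ s + t := by
    calc ‖w‖ ≤ ‖s • (y₁ - c)‖ + ‖t • (y₂ - c)‖ := by rw [hw]; exact norm_add_le _ _
    _ = s + t := by
        rw [norm_smul, norm_smul, hu₁, hu₂, Real.norm_eq_abs, Real.norm_eq_abs,
          abs_of_nonneg hs, abs_of_nonneg ht]; ring
  have hwpos : (0:ℝ) < ‖w‖ := norm_pos_iff.mpr hw0
  -- inner product bound from membership in a ball
  have half : ∀ (u v : E3), ‖u‖ = 1 → ‖u - v‖ ≤ 1 → ‖v‖ ^ 2 / 2 ≤ (inner ℝ (u) (v) : ℝ) := by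
    intro u v hu huv
    have hsq : ‖u - v‖ ^ 2 ≤ 1 := by nlinarith [norm_nonneg (u - v)]
    have hexp : ‖u - v‖ ^ 2 = ‖u‖ ^ 2 - 2 * (inner ℝ (u) (v) : ℝ) + ‖v‖ ^ 2 :=
      norm_sub_sq_real u v
    rw [hexp, hu] at hsq
    nlinarith
  -- the new point is in every ball
  have hmem : ∀ j : Fin f, x k + ‖w‖⁻¹ • w ∈ closedBall (x j) 1 := by
    intro j
    set v := x j - c with hv
    have h₁ : ‖y₁ - x j‖ ≤ 1 := by
      have := mem_closedBall.mp (Set.mem_iInter.mp hy₁b j)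
      rwa [dist_eq_norm] at this
    have h₂ : ‖y₂ - x j‖ ≤ 1 := by
      have := mem_closedBall.mp (Set.mem_iInter.mp hy₂b j)
      rwa [dist_eq_norm] at this
    have hb₁ : ‖v‖ ^ 2 / 2 ≤ (inner ℝ (y₁ - c) (v) : ℝ) := by
      apply half _ _ hu₁
      have : y₁ - c - v = y₁ - x j := by rw [hv]; abel
      rwa [this]
    have hb₂ : ‖v‖ ^ 2 / 2 ≤ (inner ℝ (y₂ - c) (v) : ℝ) := by
      apply half _ _ hu₂
      have : y₂ - c - v = y₂ - x j := by rw [hv]; abel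
      rwa [this]
    have hwv : (s + t) * (‖v‖ ^ 2 / 2) ≤ (inner ℝ (w) (v) : ℝ) := by
      rw [hw, inner_add_left, real_inner_smul_left, real_inner_smul_left]
      nlinarith [mul_le_mul_of_nonneg_left hb₁ hs, mul_le_mul_of_nonneg_left hb₂ ht]
    have hzv : ‖v‖ ^ 2 / 2 ≤ (inner ℝ (‖w‖⁻¹ • w) (v) : ℝ) := by
      rw [real_inner_smul_left]
      have h1 : ‖w‖ * (‖v‖ ^ 2 / 2) ≤ (inner ℝ (w) (v) : ℝ) :=
        le_trans (mul_le_mul_of_nonneg_right hnw (by positivity)) hwv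
      calc ‖v‖ ^ 2 / 2 = ‖w‖⁻¹ * (‖w‖ * (‖v‖ ^ 2 / 2)) := by
            field_simp
        _ ≤ ‖w‖⁻¹ * (inner ℝ (w) (v) : ℝ) :=
            mul_le_mul_of_nonneg_left h1 (by positivity)
    have hzn : ‖‖w‖⁻¹ • w‖ = 1 := by
      rw [norm_smul, Real.norm_eq_abs, abs_of_nonneg (by positivity), inv_mul_cancel₀ hwpos.ne']
    rw [mem_closedBall, dist_eq_norm]
    have heq : x k + ‖w‖⁻¹ • w - x j = ‖w‖⁻¹ • w - v := by rw [hv, hc]; abel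
    rw [heq]
    have hns : ‖‖w‖⁻¹ • w - v‖ ^ 2 ≤ 1 := by
      rw [norm_sub_sq_real, hzn]
      nlinarith
    nlinarith [norm_nonneg (‖w‖⁻¹ • w - v)]
  have hzb : x k + ‖w‖⁻¹ • w ∈ bpoly x := Set.mem_iInter.mpr hmem
  have hzn : ‖‖w‖⁻¹ • w‖ = 1 := by
    rw [norm_smul, Real.norm_eq_abs, abs_of_nonneg (by positivity), inv_mul_cancel₀ hwpos.ne']
  have hzs : x k + ‖w‖⁻¹ • w ∈ sphere (x k) 1 := by
    rw [mem_sphere, dist_eq_norm]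
    simpa using hzn
  refine ⟨hzs, ?_⟩
  rw [hclosed.frontier_eq]
  refine ⟨hzb, fun hin => ?_⟩
  have hsub : interior (bpoly x) ⊆ ball (x k) 1 := by
    rw [← interior_closedBall (x k) one_ne_zero]
    exact interior_mono (Set.iInter_subset _ k)
  have : dist (x k + ‖w‖⁻¹ • w) (x k) < 1 := mem_ball.mp (hsub hin)
  rw [dist_eq_norm] at this
  simp [hzn] at this
end
end

section
/- Let C = {c_1, …, c_n} ⊂ E³ be a finite set. The farthest-point Voronoi tiling of C has at least one vertex if and only if the points of C do not all lie in a common plane (i.e., the affine span of C is all of E³). -/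
open Set Metric MeasureTheory
open scoped RealInnerProductSpace

noncomputable section

lemma dist_le_iff_inner (p a b : E3) :
    dist p a ≤ dist p b ↔ 2 * ⟪b - a, p⟫ ≤ ‖b‖^2 - ‖a‖^2 := by
  rw [dist_eq_norm, dist_eq_norm, ← Real.sqrt_sq (norm_nonneg (p-a)),
    ← Real.sqrt_sq (norm_nonneg (p-b)), Real.sqrt_le_sqrt_iff (by positivity)]
  rw [norm_sub_sq_real, norm_sub_sq_real, inner_sub_left, real_inner_comm]
  constructor <;> intro h <;> nlinarith [real_inner_comm p a, real_inner_comm p b]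

lemma mem_vorCell_iff {n : ℕ} (c : Fin n → E3) (i : Fin n) (p : E3) :
    p ∈ vorCell c i ↔ ∀ j, 2 * ⟪c i - c j, p⟫ ≤ ‖c i‖^2 - ‖c j‖^2 := by
  unfold vorCell
  simp only [mem_setOf_eq]
  exact forall_congr' fun j => dist_le_iff_inner p (c j) (c i)

lemma convex_vorCell {n : ℕ} (c : Fin n → E3) (i : Fin n) : Convex ℝ (vorCell c i) := by
  have : vorCell c i = ⋂ j, {p : E3 | 2 * ⟪c i - c j, p⟫ ≤ ‖c i‖^2 - ‖c j‖^2} := by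
    ext p; simp [mem_vorCell_iff c i p]
  rw [this]
  refine convex_iInter fun j => ?_
  exact convex_halfSpace_le
    ⟨fun x y => by rw [inner_add_right]; ring, fun r x => by rw [real_inner_smul_right, smul_eq_mul]; ring⟩ _

lemma closed_vorCell {n : ℕ} (c : Fin n → E3) (i : Fin n) : IsClosed (vorCell c i) := by
  have : vorCell c i = ⋂ j, {p : E3 | dist p (c j) ≤ dist p (c i)} := by
    ext p; simp [vorCell]
  rw [this]
  exact isClosed_iInter fun j => isClosed_le (by fun_prop) (by fun_prop)

-- forward direction core
lemma no_top_no_extreme {n : ℕ} (c : Fin n → E3) (i : Fin n) (p : E3)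
    (hext : IsExtreme ℝ (vorCell c i) {p})
    (h : affineSpan ℝ (Set.range c) ≠ ⊤) : False := by
  have : Nonempty (Fin n) := ⟨i⟩
  have hV : vectorSpan ℝ (Set.range c) ≠ ⊤ := by
    intro hV
    apply h
    rw [← AffineSubspace.direction_eq_top_iff_of_nonempty
      ((affineSpan_nonempty ℝ).2 (range_nonempty c)), direction_affineSpan]
    exact hV
  have hOrth : (vectorSpan ℝ (Set.range c))ᗮ ≠ ⊥ := by
    intro hb
    exact hV (Submodule.orthogonal_eq_bot_iff.mp hb)
  obtain ⟨v, hvmem, hv0⟩ := (Submodule.ne_bot_iff _).mp hOrth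
  have hp : p ∈ vorCell c i := hext.1 rfl
  have hvz : ∀ j, ⟪c i - c j, v⟫ = 0 := fun j =>
    (Submodule.mem_orthogonal _ v).mp hvmem _
      (vsub_mem_vectorSpan ℝ (mem_range_self i) (mem_range_self j))
  have hmem : ∀ (t : ℝ), p + t • v ∈ vorCell c i := by
    intro t
    rw [mem_vorCell_iff]
    intro j
    rw [inner_add_right, real_inner_smul_right, hvz j, mul_zero, add_zero]
    exact (mem_vorCell_iff c i p).mp hp j
  have h1 := hmem 1
  have h2 := hmem (-1)
  have hseg : p ∈ openSegment ℝ (p + (1:ℝ) • v) (p + (-1:ℝ) • v) := by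
    refine ⟨1/2, 1/2, by norm_num, by norm_num, by norm_num, ?_⟩
    module
  have : p + (1:ℝ) • v ∈ ({p} : Set E3) := hext.2 h1 h2 rfl hseg
  simp only [mem_singleton_iff] at this
  apply hv0
  have : p + (1:ℝ)•v = p + 0 := by rw [this]; simp
  simpa using add_left_cancel this

lemma exists_extreme_point {n : ℕ} (c : Fin n → E3)
    (h : affineSpan ℝ (Set.range c) = ⊤) :
    ∃ p : E3, ∃ i : Fin n, IsExtreme ℝ (vorCell c i) {p} := by
  -- Fin n is nonempty
  have hne : Nonempty (Fin n) := by
    by_contra hn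
    rw [not_nonempty_iff] at hn
    rw [Set.range_eq_empty c, AffineSubspace.span_empty] at h
    have h0 : (0 : E3) ∈ (⊥ : AffineSubspace ℝ E3) := h ▸ AffineSubspace.mem_top ℝ E3 0
    exact AffineSubspace.notMem_bot ℝ E3 (0 : E3) h0
  -- pick the cell containing 0
  obtain ⟨i, -, hi⟩ := Finset.exists_max_image Finset.univ (fun j => dist (0:E3) (c j))
    Finset.univ_nonempty
  have h0cell : (0:E3) ∈ vorCell c i := fun j => hi j (Finset.mem_univ j)
  -- vectorSpan is top
  have hV : vectorSpan ℝ (Set.range c) = ⊤ := by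
    rw [← direction_affineSpan, h]; exact AffineSubspace.direction_top ℝ E3 E3
  -- perpendicularity forces zero
  have hperp : ∀ v : E3, (∀ j, ⟪c i - c j, v⟫ = 0) → v = 0 := by
    intro v hv
    have hvmem : v ∈ (vectorSpan ℝ (Set.range c))ᗮ := by
      rw [Submodule.mem_orthogonal]
      intro u hu
      rw [vectorSpan_def] at hu
      induction hu using Submodule.span_induction with
      | mem u hu =>
        obtain ⟨a, ⟨a', rfl⟩, b, ⟨b', rfl⟩, rfl⟩ := hu
        have h' : ⟪c a' - c b', v⟫ = 0 := by
          rw [show c a' - c b' = (c i - c b') - (c i - c a') by abel,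
            inner_sub_left, hv, hv, sub_zero]
        simpa [vsub_eq_sub] using h'
      | zero => simp
      | add u w _ _ hu hw => rw [inner_add_left, hu, hw, add_zero]
      | smul r u _ hu => rw [inner_smul_left, hu, mul_zero]
    rw [hV, Submodule.top_orthogonal_eq_bot] at hvmem
    simpa using hvmem
  set s' : E3 := ∑ j, (c j - c i) with hs'
  have hsum : ∀ v : E3, ⟪s', v⟫ = -∑ j, ⟪c i - c j, v⟫ := by
    intro v
    rw [hs', sum_inner, ← Finset.sum_neg_distrib]
    congr 1; ext j
    rw [← inner_neg_left]; congr 1; abel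
  -- cone claim
  have hcone : ∀ v : E3, (∀ j, ⟪c i - c j, v⟫ ≤ 0) → ⟪s', v⟫ ≤ 0 → v = 0 := by
    intro v hv hsv
    refine hperp v ?_
    have h1 : ∑ j, ⟪c i - c j, v⟫ = 0 := by
      have h2 : (0:ℝ) ≤ ∑ j, ⟪c i - c j, v⟫ := by have h4 := hsum v; linarith
      have h3 : ∑ j, ⟪c i - c j, v⟫ ≤ 0 :=
        Finset.sum_nonpos fun j _ => hv j
      linarith
    intro j
    have := (Finset.sum_eq_zero_iff_of_nonpos (fun j _ => hv j)).mp h1 j (Finset.mem_univ j)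
    exact this
  -- the coercive functional and its positivity on the sphere
  set m : E3 → ℝ := fun v => (Finset.univ.sup' Finset.univ_nonempty
      fun j => ⟪c i - c j, v⟫) ⊔ ⟪s', v⟫ with hm
  have hmcont : Continuous m := by
    refine Continuous.max ?_ ?_
    · exact Continuous.finset_sup'_apply Finset.univ_nonempty
        fun j _ => continuous_const.inner continuous_id
    · exact continuous_const.inner continuous_id
  have hsph : (sphere (0:E3) 1).Nonempty := by
    refine ⟨EuclideanSpace.single 0 (1:ℝ), ?_⟩
    simp [EuclideanSpace.norm_single]
  obtain ⟨v₀, hv₀mem, hv₀min⟩ := (isCompact_sphere (0:E3) 1).exists_isMinOn hsph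
    hmcont.continuousOn
  set ε : ℝ := m v₀ with hε
  have hv₀norm : ‖v₀‖ = 1 := mem_sphere_zero_iff_norm.mp hv₀mem
  have hεpos : 0 < ε := by
    by_contra hle
    push_neg at hle
    have hle' : (Finset.univ.sup' Finset.univ_nonempty
        fun j => ⟪c i - c j, v₀⟫) ⊔ ⟪s', v₀⟫ ≤ 0 := hle
    have hsup := sup_le_iff.mp hle'
    have hall : ∀ j, ⟪c i - c j, v₀⟫ ≤ 0 := by
      intro j
      exact le_trans (Finset.le_sup' (fun j => ⟪c i - c j, v₀⟫) (Finset.mem_univ j)) hsup.1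
    have := hcone v₀ hall hsup.2
    rw [this] at hv₀norm
    simp at hv₀norm
  -- the bound constant
  set B : ℝ := (Finset.univ.sup' (Finset.univ_nonempty (α := Fin n))
      fun j => ‖c i‖^2 - ‖c j‖^2) ⊔ 0 with hB
  have hBnonneg : 0 ≤ B := le_sup_right
  -- the slice and its boundedness
  set S : Set E3 := vorCell c i ∩ {x | ⟪s', x⟫ ≤ 0} with hS
  have hSsub : S ⊆ closedBall 0 (B / (2*ε)) := by
    intro x hx
    rw [mem_closedBall_zero_iff]
    rcases eq_or_ne x 0 with rfl | hx0
    · simpa using div_nonneg hBnonneg (by positivity)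
    · set v : E3 := ‖x‖⁻¹ • x with hv
      have hxnorm : (0:ℝ) < ‖x‖ := norm_pos_iff.mpr hx0
      have hvnorm : ‖v‖ = 1 := by
        rw [hv, norm_smul, norm_inv, norm_norm, inv_mul_cancel₀ hxnorm.ne']
      have hxv : x = ‖x‖ • v := by
        rw [hv, smul_smul, mul_inv_cancel₀ hxnorm.ne', one_smul]
      have hεv : ε ≤ m v := hv₀min (mem_sphere_zero_iff_norm.mpr hvnorm)
      rcases le_sup_iff.mp hεv with hcase | hcase
      · obtain ⟨j, -, hj⟩ := Finset.exists_mem_eq_sup' (Finset.univ_nonempty (α := Fin n))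
          (fun j => ⟪c i - c j, v⟫)
        rw [hj] at hcase
        have key : ⟪c i - c j, x⟫ = ‖x‖ * ⟪c i - c j, v⟫ := by
          conv_lhs => rw [hxv]
          rw [real_inner_smul_right]
        have h1 : ε * ‖x‖ ≤ ⟪c i - c j, x⟫ := by
          rw [key]; nlinarith
        have h2 : 2 * ⟪c i - c j, x⟫ ≤ ‖c i‖^2 - ‖c j‖^2 :=
          (mem_vorCell_iff c i x).mp hx.1 j
        have h3 : ‖c i‖^2 - ‖c j‖^2 ≤ B :=
          le_trans (Finset.le_sup' (fun j => ‖c i‖^2 - ‖c j‖^2) (Finset.mem_univ j)) le_sup_left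
        rw [le_div_iff₀ (by positivity)]
        nlinarith
      · have key : ⟪s', x⟫ = ‖x‖ * ⟪s', v⟫ := by
          conv_lhs => rw [hxv]
          rw [real_inner_smul_right]
        have h1 : ε * ‖x‖ ≤ ⟪s', x⟫ := by rw [key]; nlinarith
        have h2 : ⟪s', x⟫ ≤ 0 := hx.2
        nlinarith [div_nonneg hBnonneg (by positivity : (0:ℝ) ≤ 2*ε), mul_pos hεpos hxnorm]
  have hSclosed : IsClosed S :=
    (closed_vorCell c i).inter
      (isClosed_le (continuous_const.inner continuous_id) continuous_const)
  have hScomp : IsCompact S :=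
    isCompact_of_isClosed_isBounded hSclosed
      ((isBounded_closedBall).subset hSsub)
  have h0S : (0:E3) ∈ S := ⟨h0cell, by simp⟩
  -- minimize ⟪s', ·⟫ on S
  have hcont_s : Continuous fun x : E3 => (⟪s', x⟫ : ℝ) := continuous_const.inner continuous_id
  obtain ⟨p, hpS, hpmin⟩ := hScomp.exists_isMinOn (f := fun x : E3 => (⟪s', x⟫ : ℝ))
    ⟨0, h0S⟩ hcont_s.continuousOn
  -- p minimizes on the whole cell
  have hmin : ∀ y ∈ vorCell c i, ⟪s', p⟫ ≤ ⟪s', y⟫ := by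
    intro y hy
    rcases le_or_gt (⟪s', y⟫) 0 with hy0 | hy0
    · exact hpmin (⟨hy, hy0⟩ : y ∈ S)
    · calc (⟪s', p⟫ : ℝ) ≤ ⟪s', (0:E3)⟫ := hpmin h0S
      _ = 0 := by simp
      _ ≤ ⟪s', y⟫ := hy0.le
  -- the exposed face F
  set F : Set E3 := vorCell c i ∩ {x | ⟪s', x⟫ ≤ ⟪s', p⟫} with hF
  have hFsubS : F ⊆ S := by
    intro x hx
    have hp0 : (⟪s', p⟫:ℝ) ≤ 0 := by
      calc (⟪s', p⟫:ℝ) ≤ ⟪s', (0:E3)⟫ := hpmin h0S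
      _ = 0 := by simp
    refine ⟨hx.1, ?_⟩
    show (⟪s', x⟫:ℝ) ≤ 0
    exact le_trans hx.2 hp0
  have hFclosed : IsClosed F :=
    (closed_vorCell c i).inter (isClosed_le hcont_s continuous_const)
  have hFcomp : IsCompact F := hScomp.of_isClosed_subset hFclosed hFsubS
  have hFne : F.Nonempty := ⟨p, hpS.1, show (⟪s', p⟫:ℝ) ≤ ⟪s', p⟫ from le_refl _⟩
  obtain ⟨q, hq⟩ := hFcomp.extremePoints_nonempty hFne
  have hqF : IsExtreme ℝ F {q} := isExtreme_singleton.mpr hq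
  have hFextreme : IsExtreme ℝ (vorCell c i) F := by
    constructor
    · exact fun x hx => hx.1
    · rintro x₁ hx₁ x₂ hx₂ y hyF ⟨a, b, ha, hb, hab, hy⟩
      have hfy : ⟪s', y⟫ = a * ⟪s', x₁⟫ + b * ⟪s', x₂⟫ := by
        rw [← hy, inner_add_right, real_inner_smul_right, real_inner_smul_right]
      have h1 : ⟪s', p⟫ ≤ ⟪s', x₁⟫ := hmin x₁ hx₁
      have h2 : ⟪s', p⟫ ≤ ⟪s', x₂⟫ := hmin x₂ hx₂
      have h3 : ⟪s', y⟫ ≤ ⟪s', p⟫ := hyF.2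
      have habp : a * ⟪s', p⟫ + b * ⟪s', p⟫ = ⟪s', p⟫ := by
        rw [← add_mul, hab, one_mul]
      have hb2 : b * ⟪s', p⟫ ≤ b * ⟪s', x₂⟫ := mul_le_mul_of_nonneg_left h2 hb.le
      have ha2 : a * ⟪s', p⟫ ≤ a * ⟪s', x₁⟫ := mul_le_mul_of_nonneg_left h1 ha.le
      have hle1 : (⟪s', x₁⟫:ℝ) ≤ ⟪s', p⟫ :=
        le_of_mul_le_mul_left (by linarith) ha
      have hle2 : (⟪s', x₂⟫:ℝ) ≤ ⟪s', p⟫ :=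
        le_of_mul_le_mul_left (by linarith) hb
      exact ⟨hx₁, hle1⟩
  exact ⟨q, i, hFextreme.trans hqF⟩

/-- The farthest-point Voronoi tiling of a finite point set in `E3` has at least one vertex
if and only if the points do not all lie in a common plane, i.e. their affine span is all
of `E3`. -/
theorem voronoi_has_vertex_iff_affineSpan_top {n : ℕ} (c : Fin n → E3) :
    (∃ p : E3, IsVorVertex c p) ↔ affineSpan ℝ (Set.range c) = ⊤ := by
  constructor
  · rintro ⟨p, i, hface⟩
    by_contra h
    exact no_top_no_extreme c i p hface.2.1 h
  · intro h
    obtain ⟨q, i, hq⟩ := exists_extreme_point c h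
    refine ⟨q, i, Set.singleton_nonempty q, hq, convex_singleton q, isClosed_singleton, ?_⟩
    rw [vectorSpan_singleton]
    exact finrank_bot ℝ E3
end
end

section
/- Let C = {c_1, …, c_n} ⊂ E³ be a finite set whose affine span is all of E³, and let P = B[c_1] ∩ … ∩ B[c_n] have nonempty interior. If every vertex of the farthest-point Voronoi tiling of C lies in the interior of P, then the truncated Delaunay complex of C equals the Delaunay complex of C; that is, for every I ⊆ {1, …, n}: there exist p ∈ E³ and ρ > 0 with ‖p−c_i‖ = ρ for all i ∈ I and ‖p−c_j‖ < ρ for all j ∉ I, if and only if there exist such p and ρ with, in addition, p ∈ P. -/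
open Set Metric MeasureTheory
open scoped RealInnerProductSpace

noncomputable section

private lemma seg_eq_helper {t A B β : ℝ} (ht0 : 0 < t) (ht1 : t < 1)
    (hA : A ≤ β) (hB : B ≤ β) (h : (1 - t) * A + t * B = β) : A = β ∧ B = β := by
  constructor <;> nlinarith

private lemma dist_sq_lin (q x y : E3) :
    ⟪(2:ℝ) • (y - x), q⟫ - (‖y‖^2 - ‖x‖^2) = dist q x ^ 2 - dist q y ^ 2 := by
  rw [dist_eq_norm, dist_eq_norm, norm_sub_sq_real, norm_sub_sq_real,
    real_inner_smul_left, inner_sub_left, real_inner_comm q x, real_inner_comm q y]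
  ring

private lemma dist_le_iff_lin (q x y : E3) :
    dist q x ≤ dist q y ↔ ⟪(2:ℝ) • (y - x), q⟫ ≤ ‖y‖^2 - ‖x‖^2 := by
  have h := dist_sq_lin q x y
  have h2 : dist q x ≤ dist q y ↔ dist q x ^ 2 ≤ dist q y ^ 2 := by
    constructor
    · intro hh; exact pow_le_pow_left₀ dist_nonneg hh 2
    · intro hh; nlinarith [dist_nonneg (x := q) (y := x), dist_nonneg (x := q) (y := y)]
  rw [h2]; constructor <;> intro <;> linarith

private lemma dist_lt_iff_lin (q x y : E3) :
    dist q x < dist q y ↔ ⟪(2:ℝ) • (y - x), q⟫ < ‖y‖^2 - ‖x‖^2 := by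
  have h := dist_sq_lin q x y
  have h2 : dist q x < dist q y ↔ dist q x ^ 2 < dist q y ^ 2 := by
    constructor
    · intro hh; nlinarith [dist_nonneg (x := q) (y := x), dist_nonneg (x := q) (y := y)]
    · intro hh; nlinarith [dist_nonneg (x := q) (y := x), dist_nonneg (x := q) (y := y)]
  rw [h2]; constructor <;> intro <;> linarith

private lemma dist_eq_iff_lin (q x y : E3) :
    dist q x = dist q y ↔ ⟪(2:ℝ) • (y - x), q⟫ = ‖y‖^2 - ‖x‖^2 := by
  have h := dist_sq_lin q x y
  constructor
  · intro hh; rw [hh, sub_self] at h; linarith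
  · intro hh
    apply le_antisymm
    · exact (dist_le_iff_lin q x y).mpr (le_of_eq hh)
    · nlinarith [dist_nonneg (x := q) (y := x), dist_nonneg (x := q) (y := y)]

private lemma extreme_singleton_of_all_eq {F : Set E3} {q : E3} (hq : q ∈ F)
    (h : ∀ x ∈ F, x = q) : IsExtreme ℝ F {q} := by
  refine ⟨singleton_subset_iff.mpr hq, ?_⟩
  intro x₁ hx₁ x₂ hx₂ x _ _
  exact h x₁ hx₁

private lemma exists_extreme_point_s18 :
    ∀ (k : ℕ) (ι : Type) (_ : Fintype ι) (a : ι → E3) (b : ι → ℝ),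
      ({q : E3 | ∀ j, ⟪a j, q⟫ ≤ b j}).Nonempty →
      (∀ v : E3, (∀ j, ⟪a j, v⟫ = 0) → v = 0) →
      Module.finrank ℝ (vectorSpan ℝ {q : E3 | ∀ j, ⟪a j, q⟫ ≤ b j}) ≤ k →
      ∃ v ∈ {q : E3 | ∀ j, ⟪a j, q⟫ ≤ b j},
        IsExtreme ℝ {q : E3 | ∀ j, ⟪a j, q⟫ ≤ b j} {v} := by
  intro k
  induction k with
  | zero =>
    intro ι inst a b hne _ hrank
    obtain ⟨q, hq⟩ := hne
    have hbot : vectorSpan ℝ {q : E3 | ∀ j, ⟪a j, q⟫ ≤ b j} = ⊥ :=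
      Submodule.finrank_eq_zero.mp (Nat.le_zero.mp hrank)
    refine ⟨q, hq, extreme_singleton_of_all_eq hq ?_⟩
    intro x hx
    have := vsub_mem_vectorSpan ℝ hx hq
    rw [hbot, Submodule.mem_bot] at this
    have : x - q = 0 := this
    exact sub_eq_zero.mp this
  | succ k ih =>
    intro ι inst a b hne hspan hrank
    classical
    by_cases hsing : ∃ q₁ ∈ {q : E3 | ∀ j, ⟪a j, q⟫ ≤ b j},
        ∃ q₂ ∈ {q : E3 | ∀ j, ⟪a j, q⟫ ≤ b j}, q₁ ≠ q₂
    · obtain ⟨q₁, hq₁, q₂, hq₂, hne12⟩ := hsing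
      -- find a direction in the vector span with a strictly positive constraint slope
      have hdex : ∃ d : E3, d ∈ vectorSpan ℝ {q : E3 | ∀ j, ⟪a j, q⟫ ≤ b j} ∧
          ∃ j, 0 < ⟪a j, d⟫ := by
        have hd0 : q₂ - q₁ ≠ 0 := sub_ne_zero.mpr (Ne.symm hne12)
        have hj : ∃ j, ⟪a j, q₂ - q₁⟫ ≠ 0 := by
          by_contra hcon
          push_neg at hcon
          exact hd0 (hspan _ hcon)
        obtain ⟨j₀, hj₀⟩ := hj
        rcases hj₀.lt_or_gt with hneg | hpos
        · refine ⟨q₁ - q₂, ?_, j₀, ?_⟩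
          · exact vsub_mem_vectorSpan ℝ hq₁ hq₂
          · rw [show q₁ - q₂ = -(q₂ - q₁) from (neg_sub q₂ q₁).symm, inner_neg_right]
            linarith
        · exact ⟨q₂ - q₁, vsub_mem_vectorSpan ℝ hq₂ hq₁, j₀, hpos⟩
      obtain ⟨d, hdspan, j₀, hj₀⟩ := hdex
      set Mp : Finset ι := Finset.univ.filter (fun j => 0 < ⟪a j, d⟫) with hMpdef
      have hMpne : Mp.Nonempty := ⟨j₀, Finset.mem_filter.mpr ⟨Finset.mem_univ _, hj₀⟩⟩
      set T : Finset ℝ := Mp.image (fun j => (b j - ⟪a j, q₁⟫) / ⟪a j, d⟫) with hTdef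
      have hTne : T.Nonempty := hMpne.image _
      set t₀ := T.min' hTne with ht₀def
      obtain ⟨m₀, hm₀Mp, hm₀⟩ := Finset.mem_image.mp (T.min'_mem hTne)
      rw [← ht₀def] at hm₀
      have hm₀pos : 0 < ⟪a m₀, d⟫ := by
        have := hm₀Mp; rw [hMpdef, Finset.mem_filter] at this; exact this.2
      have ht₀le : ∀ j, 0 < ⟪a j, d⟫ → t₀ ≤ (b j - ⟪a j, q₁⟫) / ⟪a j, d⟫ := by
        intro j hj
        have := T.min'_le _ (Finset.mem_image_of_mem _ (Finset.mem_filter.mpr ⟨Finset.mem_univ j, hj⟩))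
        rw [← ht₀def] at this
        exact this
      have ht₀nonneg : 0 ≤ t₀ := by
        rw [← hm₀]
        exact div_nonneg (by linarith [hq₁ m₀]) hm₀pos.le
      set q₀ := q₁ + t₀ • d with hq₀def
      have hinq₀ : ∀ u : E3, ⟪u, q₀⟫ = ⟪u, q₁⟫ + t₀ * ⟪u, d⟫ := by
        intro u; rw [hq₀def, inner_add_right, real_inner_smul_right]
      have hq₀F : q₀ ∈ {q : E3 | ∀ j, ⟪a j, q⟫ ≤ b j} := by
        intro j
        rw [hinq₀]
        by_cases hj : 0 < ⟪a j, d⟫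
        · have := (le_div_iff₀ hj).mp (ht₀le j hj)
          linarith
        · push_neg at hj
          have : t₀ * ⟪a j, d⟫ ≤ 0 := mul_nonpos_of_nonneg_of_nonpos ht₀nonneg hj
          linarith [hq₁ j]
      have hq₀eq : ⟪a m₀, q₀⟫ = b m₀ := by
        rw [hinq₀, ← hm₀, div_mul_cancel₀ _ (ne_of_gt hm₀pos)]
        ring
      -- the new constraint system
      set a' : Option ι → E3 := fun o => o.elim (-(a m₀)) a with ha'def
      set b' : Option ι → ℝ := fun o => o.elim (-(b m₀)) b with hb'def
      have hF'iff : ∀ x : E3, (∀ o, ⟪a' o, x⟫ ≤ b' o) ↔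
          (∀ j, ⟪a j, x⟫ ≤ b j) ∧ ⟪a m₀, x⟫ = b m₀ := by
        intro x
        constructor
        · intro h
          have h1 : ∀ j, ⟪a j, x⟫ ≤ b j := fun j => h (some j)
          have h2 := h none
          simp only [ha'def, hb'def, Option.elim, inner_neg_left] at h2
          exact ⟨h1, le_antisymm (h1 m₀) (by linarith)⟩
        · rintro ⟨h1, h2⟩ o
          cases o with
          | none =>
            simp only [ha'def, hb'def, Option.elim, inner_neg_left]
            linarith
          | some j => exact h1 j
      have hsub : {q : E3 | ∀ o, ⟪a' o, q⟫ ≤ b' o} ⊆ {q : E3 | ∀ j, ⟪a j, q⟫ ≤ b j} :=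
        fun x hx => ((hF'iff x).mp hx).1
      have hall : ∀ w ∈ vectorSpan ℝ {q : E3 | ∀ o, ⟪a' o, q⟫ ≤ b' o}, ⟪a m₀, w⟫ = 0 := by
        intro w hw
        rw [vectorSpan_def] at hw
        induction hw using Submodule.span_induction with
        | mem w hwmem =>
          obtain ⟨x, hx, y, hy, rfl⟩ := hwmem
          have hx2 := ((hF'iff x).mp hx).2
          have hy2 := ((hF'iff y).mp hy).2
          show (⟪a m₀, x - y⟫ : ℝ) = 0
          rw [inner_sub_right, hx2, hy2, sub_self]
        | zero => rw [inner_zero_right]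
        | add u v hu hv ihu ihv => rw [inner_add_right, ihu, ihv, add_zero]
        | smul r u hu ihu => rw [real_inner_smul_right, ihu, mul_zero]
      have hlt : vectorSpan ℝ {q : E3 | ∀ o, ⟪a' o, q⟫ ≤ b' o} <
          vectorSpan ℝ {q : E3 | ∀ j, ⟪a j, q⟫ ≤ b j} := by
        refine lt_of_le_of_ne (vectorSpan_mono ℝ hsub) (fun h => ?_)
        have hd : d ∈ vectorSpan ℝ {q : E3 | ∀ o, ⟪a' o, q⟫ ≤ b' o} := by
          rw [h]; exact hdspan
        exact absurd (hall d hd) (ne_of_gt hm₀pos)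
      have hrank' : Module.finrank ℝ (vectorSpan ℝ {q : E3 | ∀ o, ⟪a' o, q⟫ ≤ b' o}) ≤ k := by
        have := Submodule.finrank_lt_finrank_of_lt hlt
        omega
      obtain ⟨v, hvF', hvext⟩ := ih (Option ι) inferInstance a' b'
        ⟨q₀, fun o => ((hF'iff q₀).mpr ⟨hq₀F, hq₀eq⟩) o⟩
        (fun v hv => hspan v (fun j => hv (some j))) hrank'
      have hextFF' : IsExtreme ℝ {q : E3 | ∀ j, ⟪a j, q⟫ ≤ b j}
          {q : E3 | ∀ o, ⟪a' o, q⟫ ≤ b' o} := by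
        refine ⟨hsub, ?_⟩
        intro x₁ hx₁ x₂ hx₂ x hx hseg
        obtain ⟨hxF, hxeq⟩ := (hF'iff x).mp hx
        rw [openSegment_eq_image] at hseg
        obtain ⟨t, ht, rfl⟩ := hseg
        have hlin : ⟪a m₀, (1-t) • x₁ + t • x₂⟫ = (1-t) * ⟪a m₀, x₁⟫ + t * ⟪a m₀, x₂⟫ := by
          rw [inner_add_right, real_inner_smul_right, real_inner_smul_right]
        rw [hlin] at hxeq
        obtain ⟨e1, e2⟩ := seg_eq_helper ht.1 ht.2 (hx₁ m₀) (hx₂ m₀) hxeq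
        exact (hF'iff x₁).mpr ⟨hx₁, e1⟩
      exact ⟨v, hsub hvF', hextFF'.trans hvext⟩
    · push_neg at hsing
      obtain ⟨q, hq⟩ := hne
      exact ⟨q, hq, extreme_singleton_of_all_eq hq (fun x hx => hsing x hx q hq)⟩

/-- If the centers `c` affinely span `E3`, the intersection `P` of the unit balls around them
has nonempty interior, and every vertex of the farthest-point Voronoi tiling of `c` lies in
the interior of `P`, then the truncated Delaunay complex equals the Delaunay complex: for
every index set `I`, a witness point for `I` exists iff a witness point inside `P` exists. -/
theorem truncated_delaunay_eq_delaunay {n : ℕ} (c : Fin n → E3)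
    (hspan : affineSpan ℝ (Set.range c) = ⊤)
    (hint : (interior (bpoly c)).Nonempty)
    (hvert : ∀ p : E3, IsVorVertex c p → p ∈ interior (bpoly c)) :
    ∀ I : Set (Fin n),
      (∃ p : E3, ∃ ρ : ℝ, 0 < ρ ∧ (∀ i ∈ I, dist p (c i) = ρ) ∧
          ∀ j ∉ I, dist p (c j) < ρ) ↔
      (∃ p ∈ bpoly c, ∃ ρ : ℝ, 0 < ρ ∧ (∀ i ∈ I, dist p (c i) = ρ) ∧
          ∀ j ∉ I, dist p (c j) < ρ) := by
  classical
  intro I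
  constructor
  · rintro ⟨p, ρ₀, hρ₀, hIeq, hIlt⟩
    rcases I.eq_empty_or_nonempty with hI | ⟨i₀, hi₀⟩
    · obtain ⟨p₀, hp₀⟩ := hint
      refine ⟨p₀, interior_subset hp₀, 2, by norm_num, by simp [hI], ?_⟩
      intro j _
      have hmem : p₀ ∈ closedBall (c j) 1 := Set.mem_iInter.mp (interior_subset hp₀) j
      have := mem_closedBall.mp hmem
      linarith
    · have hpi₀ : dist p (c i₀) = ρ₀ := hIeq i₀ hi₀
      have hvs : vectorSpan ℝ (Set.range c) = ⊤ := by
        rw [← direction_affineSpan, hspan, AffineSubspace.direction_top]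
      set a : Fin n ⊕ Fin n → E3 := Sum.elim (fun j => (2:ℝ) • (c i₀ - c j))
        (fun i => if i ∈ I then (2:ℝ) • (c i - c i₀) else 0) with hadef
      set b : Fin n ⊕ Fin n → ℝ := Sum.elim (fun j => ‖c i₀‖^2 - ‖c j‖^2)
        (fun i => if i ∈ I then ‖c i‖^2 - ‖c i₀‖^2 else 0) with hbdef
      have hFmem : ∀ x : E3, (∀ m, ⟪a m, x⟫ ≤ b m) ↔
          (∀ j, dist x (c j) ≤ dist x (c i₀)) ∧ (∀ i ∈ I, dist x (c i) = dist x (c i₀)) := by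
        intro x
        constructor
        · intro h
          refine ⟨fun j => (dist_le_iff_lin x (c j) (c i₀)).mpr (h (Sum.inl j)), fun i hi => ?_⟩
          have h1 := (dist_le_iff_lin x (c i) (c i₀)).mpr (h (Sum.inl i))
          have h2 := h (Sum.inr i)
          rw [hadef, hbdef] at h2
          simp only [Sum.elim_inr, if_pos hi] at h2
          exact le_antisymm h1 ((dist_le_iff_lin x (c i₀) (c i)).mpr h2)
        · rintro ⟨h1, h2⟩ m
          cases m with
          | inl j => exact (dist_le_iff_lin x (c j) (c i₀)).mp (h1 j)
          | inr i =>
            by_cases hi : i ∈ I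
            · rw [hadef, hbdef]
              simp only [Sum.elim_inr, if_pos hi]
              exact (dist_le_iff_lin x (c i₀) (c i)).mp (le_of_eq (h2 i hi).symm)
            · rw [hadef, hbdef]
              simp only [Sum.elim_inr, if_neg hi, inner_zero_left, le_refl]
      have hspanF : ∀ v : E3, (∀ m, ⟪a m, v⟫ = 0) → v = 0 := by
        intro v hv
        have h0 : ∀ j, ⟪c i₀ - c j, v⟫ = 0 := by
          intro j
          have := hv (Sum.inl j)
          rw [hadef] at this
          simp only [Sum.elim_inl] at this
          rw [real_inner_smul_left] at this
          linarith
        have hall : ∀ w ∈ vectorSpan ℝ (Set.range c), ⟪w, v⟫ = 0 := by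
          intro w hw
          rw [vectorSpan_def] at hw
          induction hw using Submodule.span_induction with
          | mem w hwmem =>
            obtain ⟨x, ⟨jx, rfl⟩, y, ⟨jy, rfl⟩, rfl⟩ := hwmem
            show (⟪c jx - c jy, v⟫ : ℝ) = 0
            have hxy : c jx - c jy = (c i₀ - c jy) - (c i₀ - c jx) := by abel
            rw [hxy, inner_sub_left, h0 jy, h0 jx, sub_self]
          | zero => rw [inner_zero_left]
          | add u w hu hw ihu ihw => rw [inner_add_left, ihu, ihw, add_zero]
          | smul r u hu ihu => rw [real_inner_smul_left, ihu, mul_zero]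
        have hvv := hall v (by rw [hvs]; exact Submodule.mem_top)
        exact inner_self_eq_zero.mp hvv
      have hrank : Module.finrank ℝ (vectorSpan ℝ {q : E3 | ∀ m, ⟪a m, q⟫ ≤ b m}) ≤ 3 := by
        have h1 : Module.finrank ℝ E3 = 3 := finrank_euclideanSpace_fin
        have h2 := Submodule.finrank_le (vectorSpan ℝ {q : E3 | ∀ m, ⟪a m, q⟫ ≤ b m})
        omega
      have hpF : p ∈ {q : E3 | ∀ m, ⟪a m, q⟫ ≤ b m} := by
        refine (hFmem p).mpr ⟨fun j => ?_, fun i hi => by rw [hIeq i hi, hpi₀]⟩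
        by_cases hj : j ∈ I
        · rw [hIeq j hj, hpi₀]
        · rw [hpi₀]; exact (hIlt j hj).le
      obtain ⟨v, hvF, hvext⟩ := exists_extreme_point_s18 3 (Fin n ⊕ Fin n) inferInstance a b
        ⟨p, hpF⟩ hspanF hrank
      have hFsubcell : {q : E3 | ∀ m, ⟪a m, q⟫ ≤ b m} ⊆ vorCell c i₀ :=
        fun x hx => ((hFmem x).mp hx).1
      have hcellF : IsExtreme ℝ (vorCell c i₀) {q : E3 | ∀ m, ⟪a m, q⟫ ≤ b m} := by
        refine ⟨hFsubcell, ?_⟩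
        intro x₁ hx₁ x₂ hx₂ x hx hseg
        rw [openSegment_eq_image] at hseg
        obtain ⟨t, ht, rfl⟩ := hseg
        have hx₁' : ∀ j, dist x₁ (c j) ≤ dist x₁ (c i₀) := hx₁
        have hx₂' : ∀ j, dist x₂ (c j) ≤ dist x₂ (c i₀) := hx₂
        have hxm := (hFmem _).mp hx
        have key : ∀ i ∈ I, dist x₁ (c i) = dist x₁ (c i₀) ∧ dist x₂ (c i) = dist x₂ (c i₀) := by
          intro i hi
          have e := (dist_eq_iff_lin _ (c i) (c i₀)).mp (hxm.2 i hi)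
          have l1 := (dist_le_iff_lin x₁ (c i) (c i₀)).mp (hx₁' i)
          have l2 := (dist_le_iff_lin x₂ (c i) (c i₀)).mp (hx₂' i)
          have hlin : ⟪(2:ℝ) • (c i₀ - c i), (1-t) • x₁ + t • x₂⟫
              = (1-t) * ⟪(2:ℝ) • (c i₀ - c i), x₁⟫ + t * ⟪(2:ℝ) • (c i₀ - c i), x₂⟫ := by
            rw [inner_add_right, real_inner_smul_right, real_inner_smul_right]
          rw [hlin] at e
          obtain ⟨e1, e2⟩ := seg_eq_helper ht.1 ht.2 l1 l2 e
          exact ⟨(dist_eq_iff_lin x₁ (c i) (c i₀)).mpr e1, (dist_eq_iff_lin x₂ (c i) (c i₀)).mpr e2⟩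
        exact (hFmem x₁).mpr ⟨hx₁', fun i hi => (key i hi).1⟩
      have hvv : IsVorVertex c v := by
        refine ⟨i₀, Set.singleton_nonempty v, hcellF.trans hvext, convex_singleton v,
          isClosed_singleton, ?_⟩
        rw [vectorSpan_singleton]
        exact finrank_bot ℝ E3
      have hvint : v ∈ interior (bpoly c) := hvert v hvv
      -- move slightly from v towards p
      have hcont : ContinuousAt (fun t : ℝ => v + t • (p - v)) 0 :=
        (continuous_const.add (continuous_id.smul continuous_const)).continuousAt
      have hnhds : interior (bpoly c) ∈ nhds ((fun t : ℝ => v + t • (p - v)) 0) := by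
        refine isOpen_interior.mem_nhds ?_
        simpa using hvint
      have hpre := hcont.preimage_mem_nhds hnhds
      obtain ⟨δ, hδ, hball⟩ := Metric.mem_nhds_iff.mp hpre
      set t : ℝ := min (δ/2) (1/2) with htdef
      have ht0 : 0 < t := lt_min (by linarith) (by norm_num)
      have ht1 : t < 1 := lt_of_le_of_lt (min_le_right _ _) (by norm_num)
      set q : E3 := v + t • (p - v) with hqdef
      have hqint : q ∈ interior (bpoly c) := by
        apply hball
        rw [Metric.mem_ball, Real.dist_eq, sub_zero, abs_of_pos ht0]
        calc t ≤ δ/2 := min_le_left _ _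
        _ < δ := by linarith
      have hlinq : ∀ u : E3, ⟪u, q⟫ = (1-t) * ⟪u, v⟫ + t * ⟪u, p⟫ := by
        intro u
        rw [hqdef, inner_add_right, real_inner_smul_right, inner_sub_right]
        ring
      have hvmem := (hFmem v).mp hvF
      have hqI : ∀ i ∈ I, dist q (c i) = dist q (c i₀) := by
        intro i hi
        apply (dist_eq_iff_lin q (c i) (c i₀)).mpr
        rw [hlinq]
        have e1 := (dist_eq_iff_lin v (c i) (c i₀)).mp (hvmem.2 i hi)
        have e2 := (dist_eq_iff_lin p (c i) (c i₀)).mp (by rw [hIeq i hi, hpi₀])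
        rw [e1, e2]; ring
      have hqlt : ∀ j ∉ I, dist q (c j) < dist q (c i₀) := by
        intro j hj
        apply (dist_lt_iff_lin q (c j) (c i₀)).mpr
        rw [hlinq]
        have e1 := (dist_le_iff_lin v (c j) (c i₀)).mp (hvmem.1 j)
        have e2 := (dist_lt_iff_lin p (c j) (c i₀)).mp (by rw [hpi₀]; exact hIlt j hj)
        nlinarith
      have hρpos : 0 < dist q (c i₀) := by
        rcases lt_or_eq_of_le (dist_nonneg (x := q) (y := c i₀)) with h | h
        · exact h
        exfalso
        have hzero : dist q (c i₀) = 0 := h.symm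
        have hallI : ∀ j, j ∈ I := by
          intro j
          by_contra hj
          have := hqlt j hj
          rw [hzero] at this
          exact absurd this (not_lt.mpr dist_nonneg)
        have hallq : ∀ j, c j = q := by
          intro j
          have := hqI j (hallI j)
          rw [hzero] at this
          exact (dist_eq_zero.mp this).symm
        have hsubq : Set.range c ⊆ ({q} : Set E3) := by
          rintro _ ⟨j, rfl⟩
          exact hallq j
        have h1 : vectorSpan ℝ (Set.range c) ≤ vectorSpan ℝ ({q} : Set E3) :=
          vectorSpan_mono ℝ hsubq
        rw [hvs, vectorSpan_singleton] at h1
        have h2 : (EuclideanSpace.single (0 : Fin 3) (1:ℝ) : E3) = 0 := by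
          have := h1 (Submodule.mem_top (x := (EuclideanSpace.single (0 : Fin 3) (1:ℝ) : E3)))
          simpa using this
        have h3 := congrArg (fun w : E3 => w 0) h2
        simp [EuclideanSpace.single_apply] at h3
      exact ⟨q, interior_subset hqint, dist q (c i₀), hρpos, fun i hi => hqI i hi,
        fun j hj => hqlt j hj⟩
  · rintro ⟨p, _, ρ, h⟩
    exact ⟨p, ρ, h⟩
end
end
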